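/- arXiv:cond-mat/0606040 — 8 statements merged into one kernel-verified Lean document; each statement's English description precedes it below -/
import Mathlib

section
/- Let α ∈ (0,2] and let s be a nonzero real number. Provided all denominators involved are nonzero (namely α - (s-1) ≠ 0, z_α(s) ≠ 0, α - (1/z_α(s) - 1) ≠ 0, α - (1/s - 1) ≠ 0, α + (s-1) ≠ 0 and z_α⁻¹(s) ≠ 0), the function z_α satisfies the two identities: z_α(1/z_α(s)) = 1/s and z_α(1/s) = 1/z_α⁻¹(s). -/
/-- The rational map `z_α(s) = (αs - (s-1))/(α - (s-1))`. -/
noncomputable def zMap (α s : ℝ) : ℝ := (α * s - (s - 1)) / (α - (s - 1))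

/-- The rational map `z_α⁻¹(t) = (αt + (t-1))/(α + (t-1))`. -/
noncomputable def zMapInv (α t : ℝ) : ℝ := (α * t + (t - 1)) / (α + (t - 1))

/-- For `α ∈ (0,2]` and nonzero `s` (with all denominators nonzero),
`z_α(1/z_α(s)) = 1/s` and `z_α(1/s) = 1/z_α⁻¹(s)`. -/
theorem zMap_inverse_identities (α : ℝ) (hα0 : 0 < α) (hα2 : α ≤ 2)
    (s : ℝ) (hs0 : s ≠ 0)
    (h1 : α - (s - 1) ≠ 0) (h2 : zMap α s ≠ 0)
    (h3 : α - (1 / zMap α s - 1) ≠ 0) (h4 : α - (1 / s - 1) ≠ 0)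
    (h5 : α + (s - 1) ≠ 0) (h6 : zMapInv α s ≠ 0) :
    zMap α (1 / zMap α s) = 1 / s ∧ zMap α (1 / s) = 1 / zMapInv α s := by
  have hα : α ≠ 0 := hα0.ne'
  have hN : α * s - (s - 1) ≠ 0 := by
    intro h; apply h2; rw [zMap, h, zero_div]
  have hM : α * s + (s - 1) ≠ 0 := by
    intro h; apply h6; rw [zMapInv, h, zero_div]
  have hz : 1 / zMap α s = (α - (s - 1)) / (α * s - (s - 1)) := by
    rw [zMap, one_div_div]
  constructor
  · rw [zMap, hz]
    rw [div_eq_div_iff _ hs0]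
    · field_simp
      ring
    · field_simp
      intro h
      apply hs0
      have h' : α ^ 2 * s = 0 := by
        rcases div_eq_zero_iff.mp h with h | h
        · linear_combination h
        · exact absurd h hN
      exact (mul_eq_zero.mp h').resolve_left (pow_ne_zero 2 hα)
  · rw [zMap, zMapInv, one_div_div]
    rw [div_eq_div_iff h4 hM]
    field_simp
    ring
end

section
/- Let α ∈ (0,2] and let q be real. Define the sequence by q_{α,0} = q and q_{α,n+1} = z_α(q_{α,n}). If α - k(q-1) ≠ 0 for every integer k with 0 ≤ k ≤ n, then the n-th forward iterate has the closed form q_{α,n} = (αq - n(q-1))/(α - n(q-1)) = 1 + α(q-1)/(α - n(q-1)). -/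
lemma zMap_aux (α q : ℝ) (hα : α ≠ 0) (n : ℕ) (h : ∀ k : ℕ, k ≤ n → α - (k : ℝ) * (q - 1) ≠ 0) :
    (zMap α)^[n] q = (α * q - (n : ℝ) * (q - 1)) / (α - (n : ℝ) * (q - 1)) := by
  induction n with
  | zero => simp [mul_div_assoc, mul_div_cancel_left₀ _ hα]
  | succ n ih =>
    have hD : α - (n : ℝ) * (q - 1) ≠ 0 := h n (Nat.le_succ n)
    have hD' : α - ((n : ℝ) + 1) * (q - 1) ≠ 0 := by
      have := h (n + 1) le_rfl; push_cast at this; exact this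
    rw [Function.iterate_succ_apply', ih (fun k hk => h k (Nat.le_succ_of_le hk))]
    have key : α - ((α * q - (n : ℝ) * (q - 1)) / (α - (n : ℝ) * (q - 1)) - 1)
        = α * (α - ((n : ℝ) + 1) * (q - 1)) / (α - (n : ℝ) * (q - 1)) := by
      field_simp; ring
    unfold zMap
    rw [key]
    push_cast
    rw [div_eq_div_iff (div_ne_zero (mul_ne_zero hα hD') hD) hD']
    field_simp
    ring

/-- Closed form of the forward iterates `q_{α,n}` of `z_α` starting at `q`:
if `α - k(q-1) ≠ 0` for `0 ≤ k ≤ n`, then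
`q_{α,n} = (αq - n(q-1))/(α - n(q-1)) = 1 + α(q-1)/(α - n(q-1))`. -/
theorem zMap_iterate_closed_form (α : ℝ) (hα0 : 0 < α) (hα2 : α ≤ 2)
    (q : ℝ) (n : ℕ) (h : ∀ k : ℕ, k ≤ n → α - (k : ℝ) * (q - 1) ≠ 0) :
    (zMap α)^[n] q = (α * q - (n : ℝ) * (q - 1)) / (α - (n : ℝ) * (q - 1)) ∧
      (zMap α)^[n] q = 1 + α * (q - 1) / (α - (n : ℝ) * (q - 1)) := by
  have h1 := zMap_aux α q hα0.ne' n h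
  refine ⟨h1, h1.trans ?_⟩
  have hD : α - (n : ℝ) * (q - 1) ≠ 0 := h n le_rfl
  field_simp
  ring
end

section
/- Let α ∈ (0,2] and let q be real. Define the sequence by q_{α,0} = q and q_{α,-(n+1)} = z_α⁻¹(q_{α,-n}). If α + k(q-1) ≠ 0 for every integer k with 0 ≤ k ≤ n, then the n-th backward iterate has the closed form q_{α,-n} = (αq + n(q-1))/(α + n(q-1)), i.e., the closed form (αq - m(q-1))/(α - m(q-1)) holds with m = -n. -/
lemma zMapInv_aux (α : ℝ) (hα : α ≠ 0) (q : ℝ) (n : ℕ)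
    (h : ∀ k : ℕ, k ≤ n → α + (k : ℝ) * (q - 1) ≠ 0) :
    (zMapInv α)^[n] q = (α * q + (n : ℝ) * (q - 1)) / (α + (n : ℝ) * (q - 1)) := by
  induction n with
  | zero =>
    simp
    field_simp
  | succ n ih =>
    have ih' := ih (fun k hk => h k (Nat.le_succ_of_le hk))
    rw [Function.iterate_succ_apply', ih', zMapInv]
    have hn : α + (n : ℝ) * (q - 1) ≠ 0 := h n (Nat.le_succ n)
    have hn1 : α + ((n : ℝ) + 1) * (q - 1) ≠ 0 := by
      have := h (n + 1) le_rfl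
      push_cast at this
      exact this
    have hd : α + ((α * q + (n : ℝ) * (q - 1)) / (α + (n : ℝ) * (q - 1)) - 1)
        = α * (α + ((n : ℝ) + 1) * (q - 1)) / (α + (n : ℝ) * (q - 1)) := by
      field_simp
      ring
    rw [hd]
    have hd' : α * (α + ((n : ℝ) + 1) * (q - 1)) / (α + (n : ℝ) * (q - 1)) ≠ 0 := by
      exact div_ne_zero (mul_ne_zero hα hn1) hn
    have hd0 : α + ((α * q + (n : ℝ) * (q - 1)) / (α + (n : ℝ) * (q - 1)) - 1) ≠ 0 :=
      hd ▸ hd'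
    push_cast
    field_simp [hd0]
    ring

/-- Closed form of the backward iterates `q_{α,-n}` of `z_α` (i.e. forward iterates
of `z_α⁻¹`) starting at `q`: if `α + k(q-1) ≠ 0` for `0 ≤ k ≤ n`, then
`q_{α,-n} = (αq + n(q-1))/(α + n(q-1))`, which is the closed form
`(αq - m(q-1))/(α - m(q-1))` with `m = -n`. -/
theorem zMapInv_iterate_closed_form (α : ℝ) (hα0 : 0 < α) (hα2 : α ≤ 2)
    (q : ℝ) (n : ℕ) (h : ∀ k : ℕ, k ≤ n → α + (k : ℝ) * (q - 1) ≠ 0) :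
    (zMapInv α)^[n] q = (α * q + (n : ℝ) * (q - 1)) / (α + (n : ℝ) * (q - 1)) ∧
      (zMapInv α)^[n] q
        = (α * q - (-(n : ℝ)) * (q - 1)) / (α - (-(n : ℝ)) * (q - 1)) := by
  have := zMapInv_aux α hα0.ne' q n h
  refine ⟨this, ?_⟩
  rw [this]; ring_nf
end

section
/- Let α ∈ (0,2], let q be real, and let n be an integer such that α - (n-1)(q-1) ≠ 0, α - (n+1)(q-1) ≠ 0 and q*_{α,n+1} ≠ 0. Then the duality relation q*_{α,n-1} + 1/q*_{α,n+1} = 2 holds. -/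
/-- Duality relation for `q*_{α,n} = 1 + 2(q-1)/(α - n(q-1))`:
`q*_{α,n-1} + 1/q*_{α,n+1} = 2`, provided the denominators involved are nonzero. -/
theorem q_star_duality (α : ℝ) (hα0 : 0 < α) (hα2 : α ≤ 2) (q : ℝ) (n : ℤ)
    (h1 : α - ((n : ℝ) - 1) * (q - 1) ≠ 0)
    (h2 : α - ((n : ℝ) + 1) * (q - 1) ≠ 0)
    (h3 : 1 + 2 * (q - 1) / (α - ((n : ℝ) + 1) * (q - 1)) ≠ 0) :
    (1 + 2 * (q - 1) / (α - ((n : ℝ) - 1) * (q - 1)))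
      + 1 / (1 + 2 * (q - 1) / (α - ((n : ℝ) + 1) * (q - 1))) = 2 := by
  have key : 1 + 2 * (q - 1) / (α - ((n : ℝ) + 1) * (q - 1))
      = (α - ((n : ℝ) - 1) * (q - 1)) / (α - ((n : ℝ) + 1) * (q - 1)) := by
    rw [eq_div_iff h2, add_mul, div_mul_cancel₀ _ h2]
    ring
  rw [key, one_div_div]
  have e : 2 * (q - 1) + (α - ((n : ℝ) + 1) * (q - 1)) = α - ((n : ℝ) - 1) * (q - 1) := by ring
  rw [add_assoc, ← add_div, e, div_self h1]
  norm_num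
end

section
/- Let q be a real number and let m be a natural number such that 1 + k(1-q) ≠ 0 for every integer k with 0 ≤ k ≤ m. Then the m-fold composition of the multiplicative duality followed by the additive duality satisfies the closed form (μ∘ν)^m(q) = (q + m(1-q))/(1 + m(1-q)) = (m - (m-1)q)/(m+1 - mq). -/
/-- The multiplicative duality `μ(q) = 1/q`. -/
noncomputable def muDual (q : ℝ) : ℝ := 1 / q

/-- The additive duality `ν(q) = 2 - q`. -/
def nuDual (q : ℝ) : ℝ := 2 - q

lemma mu_nu_iter_aux (q : ℝ) (m : ℕ)
    (h : ∀ k : ℕ, k ≤ m → 1 + (k : ℝ) * (1 - q) ≠ 0) :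
    (muDual ∘ nuDual)^[m] q = (q + (m : ℝ) * (1 - q)) / (1 + (m : ℝ) * (1 - q)) := by
  induction m with
  | zero => simp
  | succ n ih =>
    have hn : 1 + (n : ℝ) * (1 - q) ≠ 0 := h n (Nat.le_succ n)
    have hn1 : 1 + ((n : ℝ) + 1) * (1 - q) ≠ 0 := by
      have := h (n + 1) le_rfl; push_cast at this ⊢; exact this
    rw [Function.iterate_succ_apply', ih (fun k hk => h k (hk.trans (Nat.le_succ n)))]
    simp only [Function.comp_apply, muDual, nuDual]
    push_cast
    rw [div_eq_div_iff]
    · field_simp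
      ring
    · have : 2 - (q + (n : ℝ) * (1 - q)) / (1 + (n : ℝ) * (1 - q))
          = (1 + ((n : ℝ) + 1) * (1 - q)) / (1 + (n : ℝ) * (1 - q)) := by
        field_simp; ring
      rw [this]
      exact div_ne_zero hn1 hn
    · exact hn1

/-- Closed form of the `m`-fold iterate of `μ∘ν`:
`(μ∘ν)^m(q) = (q + m(1-q))/(1 + m(1-q)) = (m - (m-1)q)/(m+1 - mq)`,
provided `1 + k(1-q) ≠ 0` for all `0 ≤ k ≤ m`. -/
theorem mu_nu_iterate_closed_form (q : ℝ) (m : ℕ)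
    (h : ∀ k : ℕ, k ≤ m → 1 + (k : ℝ) * (1 - q) ≠ 0) :
    (muDual ∘ nuDual)^[m] q = (q + (m : ℝ) * (1 - q)) / (1 + (m : ℝ) * (1 - q)) ∧
      (muDual ∘ nuDual)^[m] q
        = ((m : ℝ) - ((m : ℝ) - 1) * q) / ((m : ℝ) + 1 - (m : ℝ) * q) := by
  have h1 := mu_nu_iter_aux q m h
  refine ⟨h1, h1.trans ?_⟩
  congr 1 <;> ring
end

section
/- Let q be a nonzero real number and let m be a natural number such that q - k(1-q) ≠ 0 for every integer k with 0 ≤ k ≤ m. Then (μ∘ν)^m(μ(q)) = (1 - m(1-q))/(q - m(1-q)) = (-m+1+mq)/(-m+(m+1)q). -/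
lemma mu_nu_aux (q : ℝ) (m : ℕ)
    (h : ∀ k : ℕ, k ≤ m → q - (k : ℝ) * (1 - q) ≠ 0) :
    (muDual ∘ nuDual)^[m] (muDual q)
        = (1 - (m : ℝ) * (1 - q)) / (q - (m : ℝ) * (1 - q)) := by
  induction m with
  | zero => simp [muDual]
  | succ n ih =>
    have hn : q - (n : ℝ) * (1 - q) ≠ 0 := h n (Nat.le_succ n)
    have hn1 : q - ((n : ℝ) + 1) * (1 - q) ≠ 0 := by
      have := h (n + 1) le_rfl
      push_cast at this
      exact this
    rw [Function.iterate_succ_apply',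
      ih (fun k hk => h k (Nat.le_succ_of_le hk))]
    simp only [Function.comp_apply, muDual, nuDual]
    push_cast
    rw [div_eq_div_iff]
    · field_simp
      ring
    · rw [sub_div' hn, div_ne_zero_iff]
      constructor
      · intro hc
        apply hn1
        rw [← hc]; ring
      · exact hn
    · exact hn1

/-- Closed form of `(μ∘ν)^m(μ(q)) = (1 - m(1-q))/(q - m(1-q))
= (-m+1+mq)/(-m+(m+1)q)`, for `q ≠ 0` with `q - k(1-q) ≠ 0` for all `0 ≤ k ≤ m`. -/
theorem mu_nu_iterate_mu_closed_form (q : ℝ) (hq : q ≠ 0) (m : ℕ)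
    (h : ∀ k : ℕ, k ≤ m → q - (k : ℝ) * (1 - q) ≠ 0) :
    (muDual ∘ nuDual)^[m] (muDual q)
        = (1 - (m : ℝ) * (1 - q)) / (q - (m : ℝ) * (1 - q)) ∧
      (muDual ∘ nuDual)^[m] (muDual q)
        = (-(m : ℝ) + 1 + (m : ℝ) * q) / (-(m : ℝ) + ((m : ℝ) + 1) * q) := by
  have key := mu_nu_aux q m h
  refine ⟨key, ?_⟩
  rw [key]
  congr 1 <;> ring
end

section
/- Let q be real. (a) If 1 + k(1-q) ≠ 0 for all integers k with 0 ≤ k ≤ n, then the n-th iterate of z_1 starting at q equals the n-th iterate of μ∘ν at q: (z_1)^n(q) = (μ∘ν)^n(q) = (q + n(1-q))/(1 + n(1-q)). (b) If 2 - k(q-1) ≠ 0 for all integers k with 0 ≤ k ≤ 2m, then the 2m-th iterate of z_2 starting at q equals the m-th iterate of μ∘ν at q: (z_2)^{2m}(q) = (μ∘ν)^m(q) = (q + m(1-q))/(1 + m(1-q)). -/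
lemma z1_eq : zMap 1 = muDual ∘ nuDual := by
  funext s
  simp only [zMap, muDual, nuDual, Function.comp_apply]
  ring_nf

lemma muNu_iter (q : ℝ) : ∀ n : ℕ, (∀ k : ℕ, k ≤ n → 1 + (k : ℝ) * (1 - q) ≠ 0) →
    (muDual ∘ nuDual)^[n] q = (q + (n : ℝ) * (1 - q)) / (1 + (n : ℝ) * (1 - q)) := by
  intro n
  induction n with
  | zero => intro _; simp
  | succ n ih =>
    intro h
    have hn : 1 + (n : ℝ) * (1 - q) ≠ 0 := h n (by omega)
    have hn1 : 1 + ((n : ℝ) + 1) * (1 - q) ≠ 0 := by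
      have := h (n + 1) le_rfl; push_cast at this; exact this
    rw [Function.iterate_succ_apply', ih (fun k hk => h k (by omega))]
    simp only [Function.comp_apply, muDual, nuDual]
    push_cast
    rw [div_eq_div_iff]
    · field_simp
      ring
    · have : 2 - (q + (n : ℝ) * (1 - q)) / (1 + (n : ℝ) * (1 - q))
          = (1 + ((n : ℝ) + 1) * (1 - q)) / (1 + (n : ℝ) * (1 - q)) := by
        field_simp; ring
      rw [this]
      exact div_ne_zero hn1 hn
    · exact hn1

lemma z2_iter (q : ℝ) : ∀ k : ℕ, (∀ j : ℕ, j ≤ k → 2 - (j : ℝ) * (q - 1) ≠ 0) →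
    (zMap 2)^[k] q = ((2 - (k : ℝ)) * q + k) / (2 - (k : ℝ) * (q - 1)) := by
  intro k
  induction k with
  | zero => intro _; norm_num
  | succ k ih =>
    intro h
    have hk : 2 - (k : ℝ) * (q - 1) ≠ 0 := h k (by omega)
    have hk1 : 2 - ((k : ℝ) + 1) * (q - 1) ≠ 0 := by
      have := h (k + 1) le_rfl; push_cast at this; exact this
    rw [Function.iterate_succ_apply', ih (fun j hj => h j (by omega))]
    simp only [zMap]
    push_cast
    have hden : 2 - (((2 - (k : ℝ)) * q + k) / (2 - (k : ℝ) * (q - 1)) - 1)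
        = 2 * (2 - ((k : ℝ) + 1) * (q - 1)) / (2 - (k : ℝ) * (q - 1)) := by
      field_simp; ring
    have hDne : 2 - (((2 - (k : ℝ)) * q + k) / (2 - (k : ℝ) * (q - 1)) - 1) ≠ 0 := by
      rw [hden]; exact div_ne_zero (mul_ne_zero two_ne_zero hk1) hk
    rw [div_eq_div_iff hDne hk1]
    field_simp
    ring

/-- (a) The `n`-th iterate of `z_1` starting at `q` equals the `n`-th iterate of
`μ∘ν` at `q`, with closed form `(q + n(1-q))/(1 + n(1-q))`, provided
`1 + k(1-q) ≠ 0` for `0 ≤ k ≤ n`.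
(b) The `2m`-th iterate of `z_2` starting at `q` equals the `m`-th iterate of
`μ∘ν` at `q`, with closed form `(q + m(1-q))/(1 + m(1-q))`, provided
`2 - k(q-1) ≠ 0` for `0 ≤ k ≤ 2m`. -/
theorem zMap_iterates_vs_mu_nu (q : ℝ) (n m : ℕ) :
    ((∀ k : ℕ, k ≤ n → 1 + (k : ℝ) * (1 - q) ≠ 0) →
      (zMap 1)^[n] q = (muDual ∘ nuDual)^[n] q ∧
        (muDual ∘ nuDual)^[n] q
          = (q + (n : ℝ) * (1 - q)) / (1 + (n : ℝ) * (1 - q))) ∧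
    ((∀ k : ℕ, k ≤ 2 * m → 2 - (k : ℝ) * (q - 1) ≠ 0) →
      (zMap 2)^[2 * m] q = (muDual ∘ nuDual)^[m] q ∧
        (muDual ∘ nuDual)^[m] q
          = (q + (m : ℝ) * (1 - q)) / (1 + (m : ℝ) * (1 - q))) := by
  constructor
  · intro h
    refine ⟨by rw [z1_eq], muNu_iter q n h⟩
  · intro h
    have hmu : ∀ k : ℕ, k ≤ m → 1 + (k : ℝ) * (1 - q) ≠ 0 := by
      intro k hk
      have h2 := h (2 * k) (by omega)
      intro hc
      apply h2
      push_cast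
      linarith
    have hm : (muDual ∘ nuDual)^[m] q = (q + (m : ℝ) * (1 - q)) / (1 + (m : ℝ) * (1 - q)) :=
      muNu_iter q m hmu
    have hz2 := z2_iter q (2 * m) h
    have hcast : ((2 - ((2 * m : ℕ) : ℝ)) * q + ((2 * m : ℕ) : ℝ)) / (2 - ((2 * m : ℕ) : ℝ) * (q - 1))
        = (q + (m : ℝ) * (1 - q)) / (1 + (m : ℝ) * (1 - q)) := by
      have hm0 : 1 + (m : ℝ) * (1 - q) ≠ 0 := hmu m le_rfl
      have h2m : 2 - ((2 * m : ℕ) : ℝ) * (q - 1) ≠ 0 := h (2 * m) le_rfl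
      push_cast at h2m ⊢
      rw [div_eq_div_iff h2m hm0]
      ring
    exact ⟨by rw [hz2, hcast, hm], hm⟩
end

section
/- Let q ≥ 1, let f : ℝ → ℝ be a nonnegative measurable function, and let a > 0. Define the q-Fourier transform F_q[f](ξ) = ∫_ℝ f(x) · (1 + (1-q)·i·ξ·x·f(x)^{q-1})^{1/(1-q)} dx (a complex-valued integral, using the principal branch of the complex power; for q = 1 the integrand is f(x)·e^{iξx}). Then the rescaled density g(x) = a⁻¹ f(x/a) satisfies F_q[g](ξ) = F_q[f](a^{2-q} ξ) for every real ξ; equivalently, for a random variable X with density f, F_q[aX](ξ) = F_q[X](a^{2-q}ξ). -/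
open MeasureTheory

/-- The `q`-Fourier transform of a nonnegative density `f`:
`F_q[f](ξ) = ∫ f(x)·(1 + (1-q)·i·ξ·x·f(x)^{q-1})^{1/(1-q)} dx`, using the
principal branch of the complex power, with the convention that the integrand
vanishes where `f(x) = 0`; for `q = 1` the integrand is `f(x)·e^{iξx}`. -/
noncomputable def qFourier (q : ℝ) (f : ℝ → ℝ) (ξ : ℝ) : ℂ :=
  ∫ x : ℝ, if f x = 0 then 0 else
    if q = 1 then (f x : ℂ) * Complex.exp (Complex.I * (ξ : ℂ) * (x : ℂ))
    else (f x : ℂ) *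
      (1 + (1 - (q : ℂ)) * Complex.I * (ξ : ℂ) * (x : ℂ) * ((f x ^ (q - 1) : ℝ) : ℂ))
        ^ (((1 / (1 - q) : ℝ)) : ℂ)

/-- Scaling property of the `q`-Fourier transform, `q ≥ 1`: for a nonnegative
measurable density `f` and `a > 0`, the rescaled density `g(x) = a⁻¹ f(x/a)`
(the density of `aX` when `X` has density `f`) satisfies
`F_q[g](ξ) = F_q[f](a^{2-q} ξ)` for every real `ξ`. -/
theorem qFourier_scaling (q : ℝ) (hq : 1 ≤ q) (f : ℝ → ℝ)
    (hf : Measurable f) (hf0 : ∀ x, 0 ≤ f x) (a : ℝ) (ha : 0 < a) (ξ : ℝ) :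
    qFourier q (fun x => a⁻¹ * f (x / a)) ξ = qFourier q f (a ^ (2 - q) * ξ) := by
  have ha' : a ≠ 0 := ha.ne'
  have hainv : (0:ℝ) < a⁻¹ := inv_pos.mpr ha
  unfold qFourier
  set L : ℝ → ℂ := fun x => if (fun x => a⁻¹ * f (x / a)) x = 0 then 0 else
    if q = 1 then ((a⁻¹ * f (x / a) : ℝ) : ℂ) * Complex.exp (Complex.I * (ξ : ℂ) * (x : ℂ))
    else ((a⁻¹ * f (x / a) : ℝ) : ℂ) *
      (1 + (1 - (q : ℂ)) * Complex.I * (ξ : ℂ) * (x : ℂ) *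
        (((a⁻¹ * f (x / a)) ^ (q - 1) : ℝ) : ℂ)) ^ (((1 / (1 - q) : ℝ)) : ℂ) with hL
  set G : ℝ → ℂ := fun x => if f x = 0 then 0 else
    if q = 1 then (f x : ℂ) * Complex.exp (Complex.I * ((a ^ (2 - q) * ξ : ℝ) : ℂ) * (x : ℂ))
    else (f x : ℂ) *
      (1 + (1 - (q : ℂ)) * Complex.I * ((a ^ (2 - q) * ξ : ℝ) : ℂ) * (x : ℂ) *
        ((f x ^ (q - 1) : ℝ) : ℂ)) ^ (((1 / (1 - q) : ℝ)) : ℂ) with hG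
  have key : ∀ y : ℝ, L (a * y) = ((a : ℂ))⁻¹ * G y := by
    intro y
    have hdiv : a * y / a = y := by field_simp
    simp only [hL, hG, hdiv]
    by_cases hfy : f y = 0
    · simp [hfy]
    · have hcond : a⁻¹ * f y ≠ 0 := mul_ne_zero (inv_ne_zero ha') hfy
      rw [if_neg hcond, if_neg hfy]
      by_cases hq1 : q = 1
      · rw [if_pos hq1, if_pos hq1]
        have : a ^ (2 - q) = a := by
          rw [hq1]; norm_num
        rw [this]
        push_cast
        ring_nf
      · rw [if_neg hq1, if_neg hq1]
        have hrp : (a⁻¹ * f y) ^ (q - 1) = a ^ (1 - q) * f y ^ (q - 1) := by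
          rw [Real.mul_rpow hainv.le (hf0 y), Real.inv_rpow ha.le,
            ← Real.rpow_neg ha.le, show -(q - 1) = 1 - q by ring]
        have hpow : (a : ℂ) * ((a ^ (1 - q) : ℝ) : ℂ) = ((a ^ (2 - q) : ℝ) : ℂ) := by
          have : a * a ^ (1 - q) = a ^ (2 - q) := by
            nth_rewrite 1 [← Real.rpow_one a]
            rw [← Real.rpow_add ha, show (1:ℝ) + (1 - q) = 2 - q by ring]
          push_cast [← this]
          ring
        have hbase : (1 : ℂ) + (1 - (q : ℂ)) * Complex.I * (ξ : ℂ) * ((a * y : ℝ) : ℂ) *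
              (((a⁻¹ * f y) ^ (q - 1) : ℝ) : ℂ)
            = 1 + (1 - (q : ℂ)) * Complex.I * ((a ^ (2 - q) * ξ : ℝ) : ℂ) * (y : ℂ) *
              ((f y ^ (q - 1) : ℝ) : ℂ) := by
          rw [hrp]
          push_cast
          rw [← hpow]
          ring
        push_cast at hbase ⊢
        rw [hbase]
        ring
  calc (∫ x : ℝ, L x) = |a| • ∫ x : ℝ, L (a * x) := by
        rw [MeasureTheory.Measure.integral_comp_mul_left L a, abs_inv, smul_smul,
          mul_inv_cancel₀ (by positivity), one_smul]
    _ = |a| • ∫ x : ℝ, ((a : ℂ))⁻¹ * G x := by simp_rw [key]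
    _ = ∫ x : ℝ, G x := by
        rw [MeasureTheory.integral_const_mul, abs_of_pos ha]
        rw [show (a : ℂ)⁻¹ * ∫ x, G x = ((a⁻¹ : ℝ) : ℂ) * ∫ x, G x by push_cast; ring,
          ← smul_eq_mul, Complex.coe_smul, smul_smul, mul_inv_cancel₀ ha', one_smul]
end
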